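/- (Second hypergeometric representation, q(G) = G.) Assume none of α_1,…,α_d is a negative integer (so (α_k+1)_s ≠ 0 for all s). Let P_n = Σ_{j=0}^n G^j(x^n)/j!. Then for every n ≥ 0, P_n(x) = ρ^n · [∏_{k=1}^d (α_k+1)_n] · Σ_{s=0}^n [(−n)_s / (s! · ∏_{k=1}^d (α_k+1)_s)] · (−x/ρ)^s; i.e., P_n(x) = ρ^n ∏_k (α_k+1)_n · 1Fd(−n; α_1+1,…,α_d+1; −x/ρ). -/

import Mathlib

open Polynomial

/-- Pochhammer symbol `(a)_j = a(a+1)⋯(a+j−1)`. -/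
noncomputable def poch (a : ℂ) (j : ℕ) : ℂ := ∏ s ∈ Finset.range j, (a + s)

/-- The derivative operator `∂` on `ℂ[x]`. -/
noncomputable def Dop : Module.End ℂ (Polynomial ℂ) := Polynomial.derivative

/-- Multiplication by `x` on `ℂ[x]`. -/
noncomputable def Xop : Module.End ℂ (Polynomial ℂ) := LinearMap.mulLeft ℂ Polynomial.X

/-- `H = x∂`. -/
noncomputable def Hop : Module.End ℂ (Polynomial ℂ) := Xop * Dop

/-- `G = R(H)∘∂` with `R(H) = ρ·∏_{k=1}^d (H + α_k + 1)`. -/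
noncomputable def Gop (d : ℕ) (α : ℕ → ℂ) (ρ : ℂ) : Module.End ℂ (Polynomial ℂ) :=
  (Polynomial.aeval Hop
    (Polynomial.C ρ * ∏ k ∈ Finset.range d, (Polynomial.X + Polynomial.C (α k + 1)))) * Dop

-- eigenvector lemma
lemma aeval_apply_eig (f : Module.End ℂ (Polynomial ℂ)) (p : Polynomial ℂ) (μ : ℂ)
    (h : f p = μ • p) (P : Polynomial ℂ) : (Polynomial.aeval f P) p = P.eval μ • p := by
  have hpow : ∀ i : ℕ, (f ^ i) p = (μ ^ i) • p := by
    intro i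
    induction i with
    | zero => simp
    | succ i ih =>
      rw [pow_succ, Module.End.mul_apply, h, map_smul, ih, smul_smul, ← pow_succ']
  induction P using Polynomial.induction_on' with
  | add P Q hP hQ => simp [hP, hQ, add_smul]
  | monomial i a =>
    rw [Polynomial.aeval_monomial]
    simp [Module.End.mul_apply, hpow i, smul_smul, mul_comm]

lemma Hop_X (t : ℕ) : Hop ((Polynomial.X : Polynomial ℂ) ^ t) = ((t : ℂ)) • Polynomial.X ^ t := by
  cases t with
  | zero => simp [Hop, Xop, Dop]
  | succ t =>
    simp only [Hop, Module.End.mul_apply, Dop, Xop, LinearMap.mulLeft_apply,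
      Polynomial.derivative_X_pow, Polynomial.smul_eq_C_mul]
    push_cast
    ring

lemma Gop_X (d : ℕ) (α : ℕ → ℂ) (ρ : ℂ) (m : ℕ) (hm : 1 ≤ m) :
    Gop d α ρ ((Polynomial.X : Polynomial ℂ) ^ m)
      = ((m : ℂ) * (ρ * ∏ k ∈ Finset.range d, (α k + m))) • Polynomial.X ^ (m - 1) := by
  rw [Gop, Module.End.mul_apply]
  have hD : Dop ((Polynomial.X : Polynomial ℂ) ^ m) = (m : ℂ) • Polynomial.X ^ (m - 1) := by
    simp [Dop, Polynomial.smul_eq_C_mul, Polynomial.derivative_X_pow]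
  rw [hD, map_smul]
  rw [aeval_apply_eig Hop _ ((m - 1 : ℕ) : ℂ) (Hop_X (m - 1))]
  rw [smul_smul]
  congr 1
  rw [Polynomial.eval_mul, Polynomial.eval_C, Polynomial.eval_prod]
  have : ∀ k, Polynomial.eval (((m - 1 : ℕ) : ℂ)) (Polynomial.X + Polynomial.C (α k + 1))
      = α k + m := by
    intro k
    have : ((m - 1 : ℕ) : ℂ) + 1 = (m : ℂ) := by
      have : (m - 1) + 1 = m := by omega
      rw [← this]; push_cast; ring
    simp only [Polynomial.eval_add, Polynomial.eval_X, Polynomial.eval_C]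
    rw [show ((m-1:ℕ):ℂ) + (α k + 1) = (((m-1:ℕ):ℂ) + 1) + α k by ring, this]
    ring
  rw [Finset.prod_congr rfl (fun k _ => this k)]

lemma Gop_pow_X (d : ℕ) (α : ℕ → ℂ) (ρ : ℂ) (n : ℕ) :
    ∀ j, j ≤ n → ((Gop d α ρ) ^ j) ((Polynomial.X : Polynomial ℂ) ^ n)
      = (∏ i ∈ Finset.range j, (ρ * ((n - i : ℕ) : ℂ) * ∏ k ∈ Finset.range d, (α k + ((n - i : ℕ) : ℂ)))) • Polynomial.X ^ (n - j) := by
  intro j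
  induction j with
  | zero => intro _; simp
  | succ j ih =>
    intro hj
    rw [pow_succ', Module.End.mul_apply, ih (by omega), map_smul,
      Gop_X d α ρ (n - j) (by omega), smul_smul, Finset.prod_range_succ]
    have : n - j - 1 = n - (j + 1) := by omega
    rw [this]
    congr 1
    ring

lemma poch_split (a : ℂ) (n : ℕ) : ∀ j, j ≤ n →
    poch (a + 1) (n - j) * ∏ i ∈ Finset.range j, (a + ((n - i : ℕ) : ℂ)) = poch (a + 1) n := by
  intro j
  induction j with
  | zero => intro _; simp
  | succ j ih =>
    intro hj
    rw [Finset.prod_range_succ]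
    have key : poch (a + 1) (n - j) = poch (a + 1) (n - (j + 1)) * (a + ((n - j : ℕ) : ℂ)) := by
      have h1 : n - j = (n - (j + 1)) + 1 := by omega
      rw [h1, poch, Finset.prod_range_succ, ← poch]
      congr 1
      have h2 : ((n - (j+1) : ℕ) : ℂ) + 1 = ((n - j : ℕ) : ℂ) := by
        rw [show n - j = (n - (j+1)) + 1 by omega]; push_cast; ring
      push_cast; ring
    linear_combination ih (by omega) - (∏ i ∈ Finset.range j, (a + ((n-i:ℕ):ℂ))) * key

lemma poch_neg_nat (n s : ℕ) (hs : s ≤ n) :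
    poch (-(n : ℂ)) s = (-1) ^ s * ((n.descFactorial s : ℕ) : ℂ) := by
  rw [poch, Nat.descFactorial_eq_prod_range]
  push_cast
  rw [Finset.prod_congr rfl (fun i hi => show (-(n:ℂ) + i) = (-1) * ((n - i : ℕ) : ℂ) by
    rw [Nat.cast_sub (by simp at hi; omega)]; ring)]
  rw [Finset.prod_mul_distrib, Finset.prod_const, Finset.card_range]


/-- Second hypergeometric representation for `q(G) = G` (no `α_k` a negative integer):
`P_n = ρ^n ∏_k (α_k+1)_n · Σ_{s=0}^n [(−n)_s / (s! ∏_k (α_k+1)_s)] (−x/ρ)^s`. -/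
theorem stmt10 (d : ℕ) (α : ℕ → ℂ) (ρ : ℂ) (hρ : ρ ≠ 0)
    (hα : ∀ k ∈ Finset.range d, ∀ s : ℕ, α k ≠ -((s : ℂ) + 1)) (n : ℕ) :
    (∑ j ∈ Finset.range (n + 1),
        ((j.factorial : ℂ))⁻¹ • ((Gop d α ρ) ^ j) (Polynomial.X ^ n))
      = (ρ ^ n * ∏ k ∈ Finset.range d, poch (α k + 1) n) •
          ∑ s ∈ Finset.range (n + 1),
            (poch (-(n : ℂ)) s
                / ((s.factorial : ℂ) * ∏ k ∈ Finset.range d, poch (α k + 1) s))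
              • ((-ρ⁻¹) ^ s • Polynomial.X ^ s) := by
  rw [Finset.smul_sum]
  conv_rhs => rw [← Finset.sum_range_reflect]
  apply Finset.sum_congr rfl
  intro j hj
  have hjn : j ≤ n := by simp at hj; omega
  have hrefl : n + 1 - 1 - j = n - j := by omega
  rw [hrefl]
  set s := n - j with hs
  rw [Gop_pow_X d α ρ n j hjn, smul_smul, smul_smul, smul_smul]
  congr 1
  -- scalar identity in ℂ
  have hpochne : ∀ t : ℕ, (∏ k ∈ Finset.range d, poch (α k + 1) t) ≠ 0 := by
    intro t
    rw [Finset.prod_ne_zero_iff]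
    intro k hk
    rw [poch, Finset.prod_ne_zero_iff]
    intro i _
    intro h
    exact hα k hk i (by linear_combination h)
  -- rewrite the big product
  have hA : ∏ i ∈ Finset.range j, (ρ * ((n - i : ℕ) : ℂ) * ∏ k ∈ Finset.range d, (α k + ((n - i : ℕ) : ℂ)))
      = ρ ^ j * ((n.descFactorial j : ℕ) : ℂ) *
        ∏ k ∈ Finset.range d, ∏ i ∈ Finset.range j, (α k + ((n - i : ℕ) : ℂ)) := by
    rw [Finset.prod_mul_distrib, Finset.prod_mul_distrib, Finset.prod_const, Finset.card_range,
      Finset.prod_comm, Nat.descFactorial_eq_prod_range]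
    push_cast
    ring
  rw [hA]
  have hpochn : ∏ k ∈ Finset.range d, poch (α k + 1) n
      = (∏ k ∈ Finset.range d, poch (α k + 1) s) *
        ∏ k ∈ Finset.range d, ∏ i ∈ Finset.range j, (α k + ((n - i : ℕ) : ℂ)) := by
    rw [← Finset.prod_mul_distrib]
    exact (Finset.prod_congr rfl (fun k _ => (poch_split (α k) n j hjn).symm))
  rw [hpochn, poch_neg_nat n s (by omega)]
  have hDj : ((n.descFactorial j : ℕ) : ℂ) * (s.factorial : ℂ) = ((n.descFactorial s : ℕ) : ℂ) * (j.factorial : ℂ) := by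
    have h1 : s.factorial * n.descFactorial j = n.factorial := Nat.factorial_mul_descFactorial hjn
    have h2 := Nat.factorial_mul_descFactorial (show s ≤ n by omega)
    rw [show n - s = j by omega] at h2
    have h3 : n.descFactorial j * s.factorial = n.descFactorial s * j.factorial := by
      rw [mul_comm (n.descFactorial j), h1, mul_comm (n.descFactorial s), h2]
    exact_mod_cast h3
  have hρn : ρ ^ n = ρ ^ j * ρ ^ s := by rw [← pow_add]; congr 1; omega
  have hneg : ((-ρ⁻¹ : ℂ)) ^ s = (-1) ^ s * (ρ⁻¹) ^ s := by rw [← mul_pow]; ring_nf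
  rw [hρn, hneg]
  have hne1 : (j.factorial : ℂ) ≠ 0 := Nat.cast_ne_zero.mpr (Nat.factorial_ne_zero j)
  have hne2 : (s.factorial : ℂ) ≠ 0 := Nat.cast_ne_zero.mpr (Nat.factorial_ne_zero s)
  have hB := hpochne s
  have hone : ((-1 : ℂ)) ^ s * (-1) ^ s = 1 := by rw [← mul_pow]; norm_num
  rw [inv_pow]
  field_simp
  linear_combination
    ((∏ k ∈ Finset.range d, ∏ i ∈ Finset.range j, (α k + ((n - i : ℕ) : ℂ)))) * hDj -
    ((∏ k ∈ Finset.range d, ∏ i ∈ Finset.range j, (α k + ((n - i : ℕ) : ℂ))) *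
      ((n.descFactorial s : ℕ) : ℂ) *
      ((j.factorial : ℕ) : ℂ)) * hone
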